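/- Fix a finite nonempty alphabet Σ equipped with a linear order, and let Ξ := Σ ⊕ Σ'' ⊕ Sym with φ : FL_Σ → Ξ* the canonical encoding. Define the traces relation trace_Σ ⊆ FL_Σ × Σ*, relating the observation ⟨A₀,a₁,A₁,…,aₙ,Aₙ⟩ to the word a₁a₂…aₙ. Then: (a) there exists a nondeterministic finite automaton with finitely many states over the alphabet Ξ ⊕ Σ recognising the relation {(φ(x), t) : (x, t) ∈ trace_Σ}; and (b) the identity encoding ψ : Σ* → Σ* is order-reflecting, i.e. whenever s is a prefix of t then s ≼ t, where ≼ is the relation on Σ* induced by trace_Σ from the extension order on FL_Σ. -/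

import Mathlib

/-- A finite linear observation over alphabet `α`: an initial annotation `A₀`
(`none` = `•`, `some A` = a stable acceptance set) together with a list of pairs
`(aᵢ, Aᵢ)` of an event and the following annotation. -/
abbrev FLObs (α : Type) := Option (Finset α) × List (α × Option (Finset α))

/-- Extension on annotations: either they are equal or the first is `•`. -/
def optExt {α : Type} (A B : Option (Finset α)) : Prop := A = B ∨ A = none

/-- The extension order on finite linear observations. -/
def extLE {α : Type} (u v : FLObs α) : Prop :=
  optExt u.1 v.1 ∧ u.2.length ≤ v.2.length ∧
    ∀ (i : ℕ) (hi : i < u.2.length) (hj : i < v.2.length),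
      (u.2.get ⟨i, hi⟩).1 = (v.2.get ⟨i, hj⟩).1 ∧
        optExt (u.2.get ⟨i, hi⟩).2 (v.2.get ⟨i, hj⟩).2

/-- The four symbols `⟨`, `⟩`, `,`, `•` used by the canonical encoding. -/
inductive MSym : Type
  | lang | rang | comma | bullet
deriving DecidableEq

instance : Fintype MSym where
  elems := {MSym.lang, MSym.rang, MSym.comma, MSym.bullet}
  complete := by intro x; cases x <;> simp

/-- The alphabet `Ξ = Σ ⊕ Σ'' ⊕ MSym` of the canonical encoding: `Sum.inl a` is the
event `a`, `Sum.inr (Sum.inl a)` is the double-primed copy `a''`, and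
`Sum.inr (Sum.inr s)` is a symbol. -/
abbrev Xi (α : Type) := α ⊕ α ⊕ MSym

/-- Encoding of an annotation: `•` is the symbol `•`, a set is the list of the
double-primed copies of its elements in increasing order. -/
def encAnnXi {α : Type} [LinearOrder α] : Option (Finset α) → List (Xi α)
  | none => [Sum.inr (Sum.inr MSym.bullet)]
  | some A => (A.sort (· ≤ ·)).map (fun a => Sum.inr (Sum.inl a))

/-- The canonical encoding `φ` of finite linear observations: the observation
`⟨A₀, a₁, A₁, …, aₙ, Aₙ⟩` is written as the string `⟨ A₀ , a₁ , A₁ , … , aₙ , Aₙ ⟩`. -/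
def phi {α : Type} [LinearOrder α] (u : FLObs α) : List (Xi α) :=
  [Sum.inr (Sum.inr MSym.lang)] ++ encAnnXi u.1 ++
    (u.2.map (fun p => [Sum.inr (Sum.inr MSym.comma), Sum.inl p.1,
      Sum.inr (Sum.inr MSym.comma)] ++ encAnnXi p.2)).flatten ++
    [Sum.inr (Sum.inr MSym.rang)]

/-- An NFA over `α ⊕ β` recognises a relation `R ⊆ α* × β*` if `R s t` holds exactly
when the NFA accepts some interleaving of `s` (as left letters) and `t` (as right
letters). -/
def Recognises {α β Q : Type} (A : NFA (α ⊕ β) Q) (R : List α → List β → Prop) : Prop :=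
  ∀ (s : List α) (t : List β),
    R s t ↔ ∃ w ∈ A.accepts, w.filterMap Sum.getLeft? = s ∧ w.filterMap Sum.getRight? = t

/-- The relation on `O` induced by a relation `M : S → O → Prop` from a preorder
`le` on `S`. -/
def inducedRel {S O : Type} (le : S → S → Prop) (M : S → O → Prop) (y₁ y₂ : O) : Prop :=
  ∀ b, M b y₂ → ∃ a, M a y₁ ∧ le a b

/-- The final annotation `Aₙ` of an observation. -/
def lastAnn {α : Type} (u : FLObs α) : Option (Finset α) :=
  match u.2.getLast? with
  | none => u.1
  | some p => p.2


/-- The traces relation: it relates `⟨A₀,a₁,A₁,…,aₙ,Aₙ⟩` to the word `a₁a₂…aₙ`. -/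
def traceRel {α : Type} (u : FLObs α) (t : List α) : Prop := t = u.2.map Prod.fst

namespace Stmt7Aux

variable {α : Type} [LinearOrder α]

abbrev Lt (α : Type) := Xi α ⊕ α

def lsym (m : MSym) : Lt α := Sum.inl (Sum.inr (Sum.inr m))
def lev (a : α) : Lt α := Sum.inl (Sum.inl a)
def lpp (a : α) : Lt α := Sum.inl (Sum.inr (Sum.inl a))

def encL (B : Option (Finset α)) : List (Lt α) := (encAnnXi B).map Sum.inl

def seg (p : α × Option (Finset α)) : List (Lt α) :=
  [lsym MSym.comma, lev p.1, Sum.inr p.1, lsym MSym.comma] ++ encL p.2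

def canon (x : FLObs α) : List (Lt α) :=
  lsym MSym.lang :: (encL x.1 ++ (x.2.map seg).flatten ++ [lsym MSym.rang])

/-- projections -/
theorem left_encL (B : Option (Finset α)) :
    (encL B).filterMap Sum.getLeft? = encAnnXi B := by
  simp [encL, List.filterMap_map, Function.comp_def]

theorem right_encL (B : Option (Finset α)) :
    (encL B).filterMap Sum.getRight? = ([] : List α) := by
  simp [encL, List.filterMap_map, Function.comp_def]

theorem left_seg (p : α × Option (Finset α)) :
    (seg p).filterMap Sum.getLeft? = [Sum.inr (Sum.inr MSym.comma), Sum.inl p.1,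
      Sum.inr (Sum.inr MSym.comma)] ++ encAnnXi p.2 := by
  simp [seg, List.filterMap_cons, List.filterMap_append, left_encL, lsym, lev]

theorem left_canon (x : FLObs α) : (canon x).filterMap Sum.getLeft? = phi x := by
  simp [canon, phi, List.filterMap_cons, List.filterMap_append, left_encL,
    lsym, List.filterMap_flatten, List.map_map, Function.comp_def, left_seg]

theorem right_canon (x : FLObs α) :
    (canon x).filterMap Sum.getRight? = x.2.map Prod.fst := by
  simp only [canon, List.filterMap_cons, List.filterMap_append, right_encL,
    lsym, Sum.getRight?_inl, List.filterMap_flatten, List.map_map]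
  have : ∀ p : α × Option (Finset α),
      (seg p).filterMap Sum.getRight? = [p.1] := by
    intro p
    simp [seg, List.filterMap_cons, List.filterMap_append, right_encL, lsym, lev]
  simp only [Function.comp_def, this]
  induction x.2 with
  | nil => simp
  | cons p L ih =>
    simp only [List.map_cons, List.flatten_cons] at *
    simp at ih ⊢
    exact ih


/-! ### The automaton -/

inductive St (α : Type) : Type
  | start | ann (lo : Option α) | annDone | expectEvent | event (a : α)
  | afterEvent | final | dead
deriving DecidableEq, Fintype

def blt : Option α → α → Bool
  | none, _ => true
  | some c, a => decide (c < a)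

def dstep : St α → Lt α → St α
  | .start, .inl (.inr (.inr .lang)) => .ann none
  | .ann lo, .inl (.inr (.inl a)) => if blt lo a then .ann (some a) else .dead
  | .ann none, .inl (.inr (.inr .bullet)) => .annDone
  | .ann _, .inl (.inr (.inr .comma)) => .expectEvent
  | .ann _, .inl (.inr (.inr .rang)) => .final
  | .annDone, .inl (.inr (.inr .comma)) => .expectEvent
  | .annDone, .inl (.inr (.inr .rang)) => .final
  | .expectEvent, .inl (.inl a) => .event a
  | .event a, .inr b => if a = b then .afterEvent else .dead
  | .afterEvent, .inl (.inr (.inr .comma)) => .ann none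
  | _, _ => .dead

def Post (w : List (Lt α)) : Prop :=
  ∃ L : List (α × Option (Finset α)), w = (L.map seg).flatten ++ [lsym MSym.rang]

def below : Option α → α → Prop
  | none, _ => True
  | some c, a => c < a

def ShapeAnn (lo : Option α) (w : List (Lt α)) : Prop :=
  (lo = none ∧ ∃ w', w = lsym MSym.bullet :: w' ∧ Post w') ∨
  (∃ A : Finset α, (∀ b ∈ A, below lo b) ∧ ∃ w', w = encL (some A) ++ w' ∧ Post w')

def Shape : St α → List (Lt α) → Prop
  | .dead => fun _ => False
  | .final => fun w => w = []
  | .start => fun w => ∃ w', w = lsym MSym.lang :: w' ∧ ShapeAnn none w'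
  | .ann lo => ShapeAnn lo
  | .annDone => Post
  | .afterEvent => fun w => ∃ w', w = lsym MSym.comma :: w' ∧ ShapeAnn none w'
  | .event a => fun w => ∃ w', w = Sum.inr a :: w' ∧
      ∃ w2, w' = lsym MSym.comma :: w2 ∧ ShapeAnn none w2
  | .expectEvent => fun w => ∃ a w', w = lev a :: w' ∧ ∃ w2, w' = Sum.inr a :: w2 ∧
      ∃ w3, w2 = lsym MSym.comma :: w3 ∧ ShapeAnn none w3

theorem shapeAnn_none_iff (w : List (Lt α)) :
    ShapeAnn none w ↔ ∃ B w', w = encL B ++ w' ∧ Post w' := by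
  constructor
  · rintro (⟨-, w', rfl, h⟩ | ⟨A, -, w', rfl, h⟩)
    · exact ⟨none, w', by simp [encL, encAnnXi, lsym], h⟩
    · exact ⟨some A, w', rfl, h⟩
  · rintro ⟨B, w', rfl, h⟩
    cases B with
    | none => exact Or.inl ⟨rfl, w', by simp [encL, encAnnXi, lsym], h⟩
    | some A => exact Or.inr ⟨A, fun b _ => trivial, w', rfl, h⟩

theorem expect_post {w : List (Lt α)} (h : Shape St.expectEvent w) :
    Post (lsym MSym.comma :: w) := by
  obtain ⟨a, w', rfl, w2, rfl, w3, rfl, h⟩ := h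
  rw [shapeAnn_none_iff] at h
  obtain ⟨B, w4, rfl, L, rfl⟩ := h
  exact ⟨(a, B) :: L, by simp [seg]⟩

theorem post_rang : Post ([lsym MSym.rang] : List (Lt α)) := ⟨[], by simp⟩

theorem encL_insert {a : α} {A : Finset α} (h : ∀ b ∈ A, a < b) :
    encL (some (insert a A)) = lpp a :: encL (some A) := by
  have ha : a ∉ A := fun hm => lt_irrefl a (h a hm)
  simp [encL, encAnnXi, Finset.sort_insert (· ≤ ·) (fun b hb => (h b hb).le) ha, lpp]

theorem shape_step (q : St α) (c : Lt α) (w : List (Lt α))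
    (h : Shape (dstep q c) w) : Shape q (c :: w) := by
  have dead : ∀ {v : List (Lt α)}, ¬ Shape (St.dead : St α) v := fun hv => hv
  cases q with
  | start =>
    rcases c with (a | a | m) | b
    · exact absurd h (by simp [dstep, Shape])
    · exact absurd h (by simp [dstep, Shape])
    · cases m with
      | lang => exact ⟨w, rfl, h⟩
      | rang => exact absurd h (by simp [dstep, Shape])
      | comma => exact absurd h (by simp [dstep, Shape])
      | bullet => exact absurd h (by simp [dstep, Shape])
    · exact absurd h (by simp [dstep, Shape])
  | ann lo =>
    rcases c with (a | a | m) | b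
    · exact absurd h (by simp [dstep, Shape])
    · -- double-primed letter
      simp only [dstep] at h
      by_cases hb : blt lo a
      · have hba : below lo a := by
          cases lo with
          | none => trivial
          | some c => exact show c < a from by simpa [blt] using hb
        rw [if_pos hb] at h
        rcases h with (⟨h', -⟩ | ⟨A, hA, w', rfl, hp⟩)
        · exact absurd h' (by simp)
        · refine Or.inr ⟨insert a A, ?_, w', ?_, hp⟩
          · intro b hb'
            rcases Finset.mem_insert.1 hb' with rfl | hb'
            · exact hba
            · cases lo with
              | none => trivial
              | some c => exact lt_trans (hba : c < a) (hA _ hb')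
          · rw [encL_insert hA, List.cons_append]
            rfl
      · rw [if_neg hb] at h
        exact absurd h dead
    · cases m with
      | lang => exact absurd h (by simp [dstep, Shape])
      | rang =>
        simp only [dstep] at h
        have hw : w = [] := h
        subst hw
        exact Or.inr ⟨∅, by simp, [lsym MSym.rang], by simp [encL, encAnnXi, lsym], post_rang⟩
      | comma =>
        simp only [dstep] at h
        refine Or.inr ⟨∅, by simp, lsym MSym.comma :: w, by simp [encL, encAnnXi, lsym], ?_⟩
        exact expect_post h
      | bullet =>
        cases lo with
        | none => exact Or.inl ⟨rfl, w, rfl, h⟩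
        | some c => exact absurd h (by simp [dstep, Shape])
    · exact absurd h (by simp [dstep, Shape])
  | annDone =>
    rcases c with (a | a | m) | b
    · exact absurd h (by simp [dstep, Shape])
    · exact absurd h (by simp [dstep, Shape])
    · cases m with
      | lang => exact absurd h (by simp [dstep, Shape])
      | rang =>
        have hw : w = [] := h
        subst hw
        exact post_rang
      | comma => exact expect_post h
      | bullet => exact absurd h (by simp [dstep, Shape])
    · exact absurd h (by simp [dstep, Shape])
  | expectEvent =>
    rcases c with (a | a | m) | b
    · exact ⟨a, w, rfl, h⟩
    · exact absurd h (by simp [dstep, Shape])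
    · cases m <;> exact absurd h (by simp [dstep, Shape])
    · exact absurd h (by simp [dstep, Shape])
  | event a =>
    rcases c with (a' | a' | m) | b
    · exact absurd h (by simp [dstep, Shape])
    · exact absurd h (by simp [dstep, Shape])
    · cases m <;> exact absurd h (by simp [dstep, Shape])
    · simp only [dstep] at h
      by_cases hab : a = b
      · subst hab
        rw [if_pos rfl] at h
        obtain ⟨w', rfl, h'⟩ := h
        exact ⟨lsym MSym.comma :: w', rfl, w', rfl, h'⟩
      · rw [if_neg hab] at h
        exact absurd h dead
  | afterEvent =>
    rcases c with (a | a | m) | b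
    · exact absurd h (by simp [dstep, Shape])
    · exact absurd h (by simp [dstep, Shape])
    · cases m with
      | lang => exact absurd h (by simp [dstep, Shape])
      | rang => exact absurd h (by simp [dstep, Shape])
      | comma => exact ⟨w, rfl, h⟩
      | bullet => exact absurd h (by simp [dstep, Shape])
    · exact absurd h (by simp [dstep, Shape])
  | final =>
    rcases c with (a | a | m) | b
    · exact absurd h (by simp [dstep, Shape])
    · exact absurd h (by simp [dstep, Shape])
    · cases m <;> exact absurd h (by simp [dstep, Shape])
    · exact absurd h (by simp [dstep, Shape])
  | dead =>
    rcases c with (a | a | m) | b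
    · exact absurd h (by simp [dstep, Shape])
    · exact absurd h (by simp [dstep, Shape])
    · cases m <;> exact absurd h (by simp [dstep, Shape])
    · exact absurd h (by simp [dstep, Shape])

theorem eval_final : ∀ (w : List (Lt α)) (q : St α),
    List.foldl dstep q w = .final → Shape q w := by
  intro w
  induction w with
  | nil =>
    intro q h
    simp only [List.foldl_nil] at h
    subst h
    rfl
  | cons c w ih =>
    intro q h
    exact shape_step q c w (ih (dstep q c) h)

theorem shape_start_iff (w : List (Lt α)) :
    Shape St.start w ↔ ∃ x : FLObs α, w = canon x := by
  constructor
  · rintro ⟨w', rfl, h⟩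
    rw [shapeAnn_none_iff] at h
    obtain ⟨B, w'', rfl, L, rfl⟩ := h
    exact ⟨(B, L), by simp [canon]⟩
  · rintro ⟨x, rfl⟩
    refine ⟨_, rfl, ?_⟩
    rw [shapeAnn_none_iff]
    exact ⟨x.1, _, by simp [canon], x.2, rfl⟩

/-! ### easy direction -/

def AnnLike (q : St α) : Prop := q = .annDone ∨ ∃ lo, q = .ann lo

theorem foldl_ann_sorted : ∀ (l : List α) (lo : Option α), l.Pairwise (· < ·) →
    (∀ b ∈ l, below lo b) →
    ∃ lo', List.foldl dstep (St.ann lo) (l.map lpp) = St.ann lo' := by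
  intro l
  induction l with
  | nil => exact fun lo _ _ => ⟨lo, rfl⟩
  | cons a t ih =>
    intro lo hs hb
    obtain ⟨h1, h2⟩ := List.pairwise_cons.mp hs
    have hblt : blt lo a = true := by
      cases lo with
      | none => rfl
      | some c => exact decide_eq_true (hb a (List.mem_cons_self (a := a) (l := t)))
    have hstep : dstep (St.ann lo) (lpp a) = St.ann (some a) := by
      simp [dstep, lpp, hblt]
    rw [List.map_cons, List.foldl_cons, hstep]
    exact ih (some a) h2 h1

theorem placeholder : True := trivial

theorem foldl_encL (B : Option (Finset α)) :
    AnnLike (List.foldl dstep (St.ann (none : Option α)) (encL B)) := by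
  cases B with
  | none => exact Or.inl (by simp [encL, encAnnXi, dstep, lsym])
  | some A =>
    obtain ⟨lo', h⟩ := foldl_ann_sorted (A.sort (· ≤ ·)) none (Finset.sortedLT_sort A).pairwise
      (fun b _ => trivial)
    refine Or.inr ⟨lo', ?_⟩
    simp only [encL, encAnnXi, List.map_map, Function.comp_def]
    exact h

theorem annlike_comma {q : St α} (h : AnnLike q) :
    dstep q (lsym MSym.comma) = St.expectEvent := by
  rcases h with rfl | ⟨lo, rfl⟩ <;> simp [dstep, lsym]

theorem annlike_rang {q : St α} (h : AnnLike q) :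
    dstep q (lsym MSym.rang) = St.final := by
  rcases h with rfl | ⟨lo, rfl⟩ <;> simp [dstep, lsym]

theorem foldl_segs : ∀ (L : List (α × Option (Finset α))) (q : St α), AnnLike q →
    List.foldl dstep q ((L.map seg).flatten ++ [lsym MSym.rang]) = St.final := by
  intro L
  induction L with
  | nil =>
    intro q hq
    simp [annlike_rang hq]
  | cons p L ih =>
    intro q hq
    obtain ⟨a, B⟩ := p
    have h1 : dstep q (lsym MSym.comma) = St.expectEvent := annlike_comma hq
    have h2 : dstep St.expectEvent (lev a) = St.event a := by simp [dstep, lev]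
    have h3 : dstep (St.event a) (Sum.inr a) = St.afterEvent := by simp [dstep]
    have h4 : dstep (St.afterEvent : St α) (lsym MSym.comma) = St.ann none := by simp [dstep, lsym]
    have hw : (List.map seg ((a, B) :: L)).flatten ++ [lsym MSym.rang]
        = [lsym MSym.comma, lev a, Sum.inr a, lsym MSym.comma] ++
          (encL B ++ ((List.map seg L).flatten ++ [lsym MSym.rang])) := by
      simp [seg]
    rw [hw, List.foldl_append, List.foldl_append]
    have h5 : List.foldl dstep q [lsym MSym.comma, lev a, Sum.inr a, lsym MSym.comma]
        = St.ann none := by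
      simp [List.foldl_cons, h1, h2, h3, h4]
    rw [h5]
    exact ih _ (foldl_encL B)

theorem canon_accepted (x : FLObs α) :
    List.foldl dstep (St.start : St α) (canon x) = St.final := by
  have h0 : dstep (St.start : St α) (lsym MSym.lang) = St.ann none := by simp [dstep, lsym]
  simp only [canon, List.foldl_cons, h0]
  rw [List.append_assoc, List.foldl_append]
  exact foldl_segs x.2 _ (foldl_encL x.1)

/-! ### The DFA and its language -/

def theDFA : DFA (Lt α) (St α) := ⟨dstep, St.start, {St.final}⟩

theorem theDFA_accepts (w : List (Lt α)) :
    w ∈ (theDFA : DFA (Lt α) (St α)).accepts ↔ ∃ x : FLObs α, w = canon x := by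
  have : w ∈ (theDFA : DFA (Lt α) (St α)).accepts ↔
      List.foldl dstep St.start w = St.final := by
    rfl
  rw [this]
  constructor
  · intro h
    exact (shape_start_iff w).mp (eval_final w _ h)
  · rintro ⟨x, rfl⟩
    exact canon_accepted x

/-! ### NFA transport along an equivalence of states -/

theorem nfa_transport {β σ τ : Type} (M : NFA β σ) (e : σ ≃ τ) :
    ∃ M' : NFA β τ, M'.accepts = M.accepts := by
  refine ⟨⟨fun q a => e '' M.step (e.symm q) a, e '' M.start, e '' M.accept⟩, ?_⟩
  have hstep : ∀ (S : Set σ) (a : β),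
      NFA.stepSet ⟨fun q a => e '' M.step (e.symm q) a, e '' M.start, e '' M.accept⟩
        (e '' S) a = e '' M.stepSet S a := by
    intro S a
    ext t
    simp only [NFA.stepSet, Set.mem_iUnion, Set.mem_image]
    constructor
    · rintro ⟨s, ⟨s₀, hs₀, rfl⟩, t₀, ht₀, rfl⟩
      exact ⟨t₀, ⟨s₀, hs₀, by simpa using ht₀⟩, rfl⟩
    · rintro ⟨t₀, ⟨s₀, hs₀, ht₀⟩, rfl⟩
      exact ⟨e s₀, ⟨s₀, hs₀, rfl⟩, t₀, by simpa using ht₀, rfl⟩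
  have heval : ∀ (w : List β) (S : Set σ),
      NFA.evalFrom ⟨fun q a => e '' M.step (e.symm q) a, e '' M.start, e '' M.accept⟩
        (e '' S) w = e '' M.evalFrom S w := by
    intro w
    induction w with
    | nil => intro S; rfl
    | cons a w ih =>
      intro S
      simp only [NFA.evalFrom, List.foldl_cons] at *
      rw [hstep S a, ih]
  ext w
  simp only [NFA.mem_accepts]
  constructor
  · rintro ⟨q, hq, hq'⟩
    rw [heval] at hq'
    obtain ⟨p, hp, rfl⟩ := hq'
    obtain ⟨p', hp', hpe⟩ := hq
    exact ⟨p, by rwa [← e.injective hpe], hp⟩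
  · rintro ⟨p, hp, hp'⟩
    exact ⟨e p, ⟨p, hp, rfl⟩, by
      rw [heval]
      exact ⟨p, hp', rfl⟩⟩

end Stmt7Aux

/-- The traces model `T` is rational: (a) there is an NFA with finitely many states
over `Ξ ⊕ Σ` recognising `{(φ x, t) : (x, t) ∈ trace_Σ}` (the output encoding `ψ`
being the identity on `Σ*`), and (b) the identity encoding is order-reflecting:
whenever `s` is a prefix of `t` then `s ≼ t` in the relation induced by `trace_Σ`
from the extension order on `FL_Σ`. -/
theorem stmt7 {α : Type} [Fintype α] [Nonempty α] [LinearOrder α] :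
    (∃ (n : ℕ) (A : NFA (Xi α ⊕ α) (Fin n)),
      Recognises A (fun s t => ∃ x : FLObs α, s = phi x ∧ traceRel x t)) ∧
    (∀ s t : List α, s <+: t → inducedRel extLE traceRel s t) := by
  constructor
  · -- part (a)
    classical
    obtain ⟨A, hA⟩ := Stmt7Aux.nfa_transport (Stmt7Aux.theDFA : DFA (Stmt7Aux.Lt α)
      (Stmt7Aux.St α)).toNFA (Fintype.equivFin (Stmt7Aux.St α))
    refine ⟨Fintype.card (Stmt7Aux.St α), A, ?_⟩
    intro s t
    have hacc : ∀ w, w ∈ A.accepts ↔ ∃ x : FLObs α, w = Stmt7Aux.canon x := by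
      intro w
      rw [hA, DFA.toNFA_correct]
      exact Stmt7Aux.theDFA_accepts w
    constructor
    · rintro ⟨x, rfl, ht⟩
      refine ⟨Stmt7Aux.canon x, (hacc _).mpr ⟨x, rfl⟩, Stmt7Aux.left_canon x, ?_⟩
      rw [Stmt7Aux.right_canon x]
      exact ht.symm
    · rintro ⟨w, hw, rfl, rfl⟩
      obtain ⟨x, rfl⟩ := (hacc w).mp hw
      exact ⟨x, Stmt7Aux.left_canon x, Stmt7Aux.right_canon x⟩
  · -- part (b)
    intro s t hst b hb
    refine ⟨(none, (b.2.take s.length).map (fun p => (p.1, none))), ?_, ?_⟩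
    · -- traceRel for the truncated observation
      show s = _
      have hs : s = t.take s.length := (List.prefix_iff_eq_take.mp hst)
      rw [hs, hb]
      simp [List.map_take, List.map_map, Function.comp_def]
    · refine ⟨Or.inr rfl, ?_, ?_⟩
      · simp only [List.length_map, List.length_take]
        exact min_le_right _ _
      · intro i hi hj
        simp only [List.length_map, List.length_take] at hi
        constructor
        · simp [List.get_eq_getElem, List.getElem_map, List.getElem_take]
        · exact Or.inr (by simp [List.get_eq_getElem, List.getElem_map])
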